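/- Let D : [0,1) → [0,1) be the doubling map D(x) = 2x mod 1, and let λ denote Lebesgue measure on [0,1). For every Hölder continuous φ : [0,1) → ℝ and every bounded measurable ψ : [0,1) → ℝ there exist constants C > 0 and ρ ∈ (0,1) such that for all n ≥ 1, |∫ φ·(ψ ∘ D^n) dλ − (∫ φ dλ)(∫ ψ dλ)| ≤ C ρ^n; that is, the doubling map exhibits exponential decay of correlations with respect to Lebesgue measure. -/

import Mathlib

open MeasureTheory Set NNReal
open scoped ENNReal

/-- The doubling map `D(x) = 2x mod 1` on `[0,1)`. -/
noncomputable def doubling (x : ℝ) : ℝ := Int.fract (2 * x)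

lemma fract_two_mul_fract (y : ℝ) : Int.fract (2 * Int.fract y) = Int.fract (2 * y) := by
  have h : 2 * Int.fract y = 2 * y - ((2 * ⌊y⌋ : ℤ) : ℝ) := by
    rw [Int.fract]; push_cast; ring
  rw [h, Int.fract_sub_intCast]

lemma doubling_iterate (n : ℕ) (hn : 1 ≤ n) (x : ℝ) :
    doubling^[n] x = Int.fract ((2:ℝ) ^ n * x) := by
  induction n with
  | zero => omega
  | succ m ih =>
    rcases Nat.lt_or_ge 1 (m + 1) with h1 | h1
    · have hm : 1 ≤ m := by omega
      rw [Function.iterate_succ_apply', ih hm, doubling, fract_two_mul_fract,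
        show (2:ℝ) * ((2:ℝ) ^ m * x) = (2:ℝ) ^ (m + 1) * x by ring]
    · have : m = 0 := by omega
      subst this
      simp [doubling]

lemma measurable_doubling : Measurable doubling :=
  (measurable_const.mul measurable_id).fract

/-- A bounded a.e. strongly measurable function is integrable on a finite-measure
measurable set. -/
lemma integrableOn_of_bdd {f : ℝ → ℝ} {s : Set ℝ} (hsm : MeasurableSet s)
    (hs : volume s ≠ ⊤) (hm : AEStronglyMeasurable f (volume.restrict s)) {M : ℝ}
    (hb : ∀ x ∈ s, |f x| ≤ M) : IntegrableOn f s := by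
  haveI : IsFiniteMeasure (volume.restrict s) :=
    ⟨by rw [Measure.restrict_apply_univ]; exact lt_top_iff_ne_top.2 hs⟩
  exact ⟨hm, HasFiniteIntegral.of_bounded
    ((ae_restrict_iff' hsm).2 (ae_of_all _ fun x hx => hb x hx))⟩

/-- Real-distance form of the Hölder estimate. -/
lemma holder_dist_le {C r : ℝ≥0} {f : ℝ → ℝ} {s : Set ℝ} (h : HolderOnWith C r f s)
    {x y : ℝ} (hx : x ∈ s) (hy : y ∈ s) {d : ℝ} (hd0 : 0 ≤ d) (hd : dist x y ≤ d) :
    |f x - f y| ≤ (C : ℝ) * d ^ (r : ℝ) := by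
  have h1 : edist (f x) (f y) ≤ (C : ℝ≥0∞) * (ENNReal.ofReal d) ^ (r : ℝ) :=
    h.edist_le_of_le hx hy ((edist_le_ofReal hd0).2 hd)
  have h2 : (C : ℝ≥0∞) * (ENNReal.ofReal d) ^ (r : ℝ)
      = ENNReal.ofReal ((C : ℝ) * d ^ (r : ℝ)) := by
    rw [ENNReal.ofReal_mul (by positivity), ← ENNReal.ofReal_rpow_of_nonneg hd0 r.coe_nonneg,
      ENNReal.ofReal_coe_nnreal]
  rw [h2] at h1
  have := (edist_le_ofReal (by positivity)).1 h1
  simpa [Real.dist_eq] using this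

/-- The doubling map `D(x) = 2x mod 1` exhibits exponential decay of
correlations with respect to Lebesgue measure `λ` on `[0,1)`: for every Hölder continuous
`φ` and bounded measurable `ψ` there are `C > 0` and `ρ ∈ (0,1)` such that for all `n ≥ 1`,
`|∫ φ · (ψ ∘ D^n) dλ − (∫ φ dλ)(∫ ψ dλ)| ≤ C ρ^n`. -/
theorem doubling_exponential_decay_of_correlations
    (φ : ℝ → ℝ) (hφ : ∃ C r : ℝ≥0, 0 < r ∧ r ≤ 1 ∧ HolderOnWith C r φ (Set.Ico (0 : ℝ) 1))
    (ψ : ℝ → ℝ) (hψmeas : Measurable ψ) (hψbdd : ∃ M : ℝ, ∀ x, |ψ x| ≤ M) :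
    ∃ C : ℝ, 0 < C ∧ ∃ ρ : ℝ, ρ ∈ Set.Ioo (0 : ℝ) 1 ∧ ∀ n : ℕ, 1 ≤ n →
      |∫ x in Set.Ico (0 : ℝ) 1, φ x * ψ (doubling^[n] x) -
          (∫ x in Set.Ico (0 : ℝ) 1, φ x) * ∫ x in Set.Ico (0 : ℝ) 1, ψ x|
        ≤ C * ρ ^ n := by
  obtain ⟨C, r, hr, hr1, hφH⟩ := hφ
  obtain ⟨M, hM⟩ := hψbdd
  have hM0 : 0 ≤ M := le_trans (abs_nonneg _) (hM 0)
  have hr0 : (0:ℝ) < (r:ℝ) := hr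
  set ρ : ℝ := (1/2 : ℝ) ^ (r : ℝ) with hρdef
  have hρ0 : 0 < ρ := Real.rpow_pos_of_pos (by norm_num) _
  have hρ1 : ρ < 1 := Real.rpow_lt_one (by norm_num) (by norm_num) hr0
  refine ⟨(C : ℝ) * M + 1, by positivity, ρ, ⟨hρ0, hρ1⟩, ?_⟩
  intro n hn
  -- notation
  set N : ℝ := (2:ℝ) ^ n with hNdef
  have hN0 : (0:ℝ) < N := by positivity
  set a : ℕ → ℝ := fun k => (k : ℝ) / N with hadef
  have ha_mono : ∀ k : ℕ, a k < a (k + 1) := by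
    intro k
    simp only [hadef]
    rw [div_lt_div_iff_of_pos_right hN0]
    push_cast; linarith
  have ha0 : a 0 = 0 := by simp [hadef]
  have haN : a (2 ^ n) = 1 := by
    simp only [hadef, hNdef]
    rw [div_eq_one_iff_eq (by positivity)]
    push_cast; ring
  have hcast : ∀ k : ℕ, k ≤ 2 ^ n → (k : ℝ) ≤ N := by
    intro k hk
    have : ((k : ℕ) : ℝ) ≤ ((2 ^ n : ℕ) : ℝ) := by exact_mod_cast hk
    simpa [hNdef] using this
  have hsub : ∀ k : ℕ, k < 2 ^ n → Ioo (a k) (a (k + 1)) ⊆ Ico (0:ℝ) 1 := by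
    intro k hk x hx
    obtain ⟨hx1, hx2⟩ := hx
    constructor
    · have : (0:ℝ) ≤ a k := by
        simp only [hadef]; positivity
      linarith
    · have h1 : a (k + 1) ≤ 1 := by
        simp only [hadef]
        rw [div_le_one hN0]
        exact_mod_cast hcast (k + 1) hk
      linarith
  -- length of each piece
  have hlen : ∀ k : ℕ, a (k + 1) - a k = 1 / N := by
    intro k
    simp only [hadef]
    rw [div_sub_div_same]
    push_cast; ring_nf
  have hvol : ∀ k : ℕ, (volume (Ioo (a k) (a (k + 1)))).toReal = 1 / N := by
    intro k
    rw [Real.volume_Ioo, ENNReal.toReal_ofReal (by linarith [ha_mono k]), hlen k]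
  have hvolne : ∀ k : ℕ, volume (Ioo (a k) (a (k + 1))) ≠ ⊤ := by
    intro k; rw [Real.volume_Ioo]; exact ENNReal.ofReal_ne_top
  -- the exponential rate
  have hρn : (1 / N) ^ (r : ℝ) = ρ ^ n := by
    have h1 : (1 / N : ℝ) = (1/2 : ℝ) ^ n := by
      rw [hNdef, one_div, ← inv_pow]; norm_num
    rw [h1, ← Real.rpow_natCast ((1/2 : ℝ)) n, ← Real.rpow_mul (by norm_num),
      mul_comm, Real.rpow_mul (by norm_num), Real.rpow_natCast]
  have hρnpos : 0 < ρ ^ n := by positivity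
  -- bound on φ
  have hφbd : ∀ x ∈ Ico (0:ℝ) 1, |φ x| ≤ |φ 0| + (C : ℝ) := by
    intro x hx
    have h0 : (0:ℝ) ∈ Ico (0:ℝ) 1 := by norm_num
    have := holder_dist_le hφH hx h0 (d := 1) zero_le_one
      (by rw [Real.dist_eq]; rw [abs_sub_comm]; simp [abs_of_nonneg hx.1]; linarith [hx.2])
    rw [Real.one_rpow] at this
    calc |φ x| = |φ 0 + (φ x - φ 0)| := by ring_nf
      _ ≤ |φ 0| + |φ x - φ 0| := abs_add_le _ _
      _ ≤ |φ 0| + (C : ℝ) := by linarith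
  have hφc : ContinuousOn φ (Ico (0:ℝ) 1) := hφH.continuousOn hr
  -- pointwise identification of the iterated doubling map on each piece
  have hpt : ∀ k : ℕ, k < 2 ^ n → ∀ x ∈ Ioo (a k) (a (k + 1)),
      doubling^[n] x = N * x - k := by
    intro k hk x hx
    obtain ⟨hx1, hx2⟩ := hx
    have h1 : (k : ℝ) < N * x := by
      rw [hadef] at hx1; simp only at hx1
      rw [div_lt_iff₀ hN0] at hx1; linarith
    have h2 : N * x < (k : ℝ) + 1 := by
      rw [hadef] at hx2; simp only at hx2
      rw [lt_div_iff₀ hN0] at hx2; push_cast at hx2; linarith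
    rw [doubling_iterate n hn, ← hNdef, ← Int.fract_sub_intCast (N * x) (k : ℤ)]
    rw [Int.fract_eq_self.2 ⟨by push_cast; linarith, by push_cast; linarith⟩]
    push_cast; ring
  -- measurability / integrability
  have hDnm : Measurable fun x => ψ (doubling^[n] x) :=
    hψmeas.comp (measurable_doubling.iterate n)
  have hψaffm : ∀ k : ℕ, Measurable fun x : ℝ => ψ (N * x - k) := by
    intro k
    exact hψmeas.comp ((measurable_const.mul measurable_id).sub measurable_const)
  have hφm : ∀ k : ℕ, k < 2 ^ n →
      AEStronglyMeasurable φ (volume.restrict (Ioo (a k) (a (k + 1)))) := by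
    intro k hk
    exact (hφc.mono (hsub k hk)).aestronglyMeasurable measurableSet_Ioo
  have hI2 : ∀ k : ℕ, k < 2 ^ n → IntegrableOn φ (Ioo (a k) (a (k + 1))) := by
    intro k hk
    exact integrableOn_of_bdd measurableSet_Ioo (hvolne k) (hφm k hk)
      (fun x hx => hφbd x (hsub k hk hx))
  have hI1 : ∀ k : ℕ, k < 2 ^ n →
      IntegrableOn (fun x => φ x * ψ (doubling^[n] x)) (Ioo (a k) (a (k + 1))) := by
    intro k hk
    refine integrableOn_of_bdd measurableSet_Ioo (hvolne k)
      ((hφm k hk).mul hDnm.aestronglyMeasurable.restrict)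
      (M := (|φ 0| + (C : ℝ)) * M) (fun x hx => ?_)
    rw [abs_mul]
    exact mul_le_mul (hφbd x (hsub k hk hx)) (hM _) (abs_nonneg _)
      (by positivity)
  have hI3 : ∀ k : ℕ, IntegrableOn (fun x : ℝ => ψ (N * x - k)) (Ioo (a k) (a (k + 1))) := by
    intro k
    exact integrableOn_of_bdd measurableSet_Ioo (hvolne k)
      (hψaffm k).aestronglyMeasurable.restrict (fun x _ => hM _)
  have hI4 : ∀ k : ℕ, k < 2 ^ n →
      IntegrableOn (fun x => φ x * ψ (N * x - k)) (Ioo (a k) (a (k + 1))) := by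
    intro k hk
    refine integrableOn_of_bdd measurableSet_Ioo (hvolne k)
      ((hφm k hk).mul (hψaffm k).aestronglyMeasurable.restrict)
      (M := (|φ 0| + (C : ℝ)) * M) (fun x hx => ?_)
    rw [abs_mul]
    exact mul_le_mul (hφbd x (hsub k hk hx)) (hM _) (abs_nonneg _) (by positivity)
  have hψint : IntervalIntegrable ψ volume 0 1 := by
    rw [intervalIntegrable_iff_integrableOn_Ioc_of_le zero_le_one]
    exact integrableOn_of_bdd measurableSet_Ioc (by simp)
      hψmeas.aestronglyMeasurable.restrict (fun x _ => hM x)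
  -- splitting of integrals over [0,1) into dyadic pieces
  have split : ∀ f : ℝ → ℝ,
      (∀ k : ℕ, k < 2 ^ n → IntegrableOn f (Ioo (a k) (a (k + 1)))) →
      ∫ x in Ico (0:ℝ) 1, f x
        = ∑ k ∈ Finset.range (2 ^ n), ∫ x in Ioo (a k) (a (k + 1)), f x := by
    intro f hf
    have hint : ∀ k : ℕ, k < 2 ^ n → IntervalIntegrable f volume (a k) (a (k + 1)) := by
      intro k hk
      rw [intervalIntegrable_iff_integrableOn_Ioc_of_le (ha_mono k).le,
        integrableOn_Ioc_iff_integrableOn_Ioo]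
      exact hf k hk
    have hsum := intervalIntegral.sum_integral_adjacent_intervals (a := a)
      (n := 2 ^ n) hint
    rw [ha0, haN] at hsum
    calc ∫ x in Ico (0:ℝ) 1, f x = ∫ x in (0:ℝ)..1, f x := by
          rw [intervalIntegral.integral_of_le zero_le_one,
            MeasureTheory.integral_Ico_eq_integral_Ioo,
            MeasureTheory.integral_Ioc_eq_integral_Ioo]
      _ = ∑ k ∈ Finset.range (2 ^ n), ∫ x in a k..a (k + 1), f x := hsum.symm
      _ = ∑ k ∈ Finset.range (2 ^ n), ∫ x in Ioo (a k) (a (k + 1)), f x := by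
          refine Finset.sum_congr rfl fun k _ => ?_
          rw [intervalIntegral.integral_of_le (ha_mono k).le,
            MeasureTheory.integral_Ioc_eq_integral_Ioo]
  -- change of variables on each piece
  have cov : ∀ k : ℕ, ∫ x in Ioo (a k) (a (k + 1)), ψ (N * x - k)
      = (1 / N) * ∫ x in Ico (0:ℝ) 1, ψ x := by
    intro k
    have e1 : N * a k - k = 0 := by
      simp only [hadef]; field_simp; ring
    have e2 : N * a (k + 1) - k = 1 := by
      have : N * a (k + 1) = (k : ℝ) + 1 := by
        simp only [hadef]
        rw [mul_div_cancel₀ _ hN0.ne']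
        push_cast; ring
      rw [this]; ring
    rw [← MeasureTheory.integral_Ioc_eq_integral_Ioo,
      ← intervalIntegral.integral_of_le (ha_mono k).le,
      intervalIntegral.integral_comp_mul_sub ψ hN0.ne' (k : ℝ), e1, e2,
      intervalIntegral.integral_of_le zero_le_one,
      MeasureTheory.integral_Ioc_eq_integral_Ioo,
      ← MeasureTheory.integral_Ico_eq_integral_Ioo]
    rw [smul_eq_mul, one_div]
  -- rewrite the correlation integral
  have hsplit1 : ∫ x in Ico (0:ℝ) 1, φ x * ψ (doubling^[n] x)
      = ∑ k ∈ Finset.range (2 ^ n), ∫ x in Ioo (a k) (a (k + 1)), φ x * ψ (N * x - k) := by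
    rw [split _ hI1]
    refine Finset.sum_congr rfl fun k hk => ?_
    refine setIntegral_congr_fun measurableSet_Ioo (fun x hx => ?_)
    rw [hpt k (Finset.mem_range.1 hk) x hx]
  have hsplit2 : ∫ x in Ico (0:ℝ) 1, φ x
      = ∑ k ∈ Finset.range (2 ^ n), ∫ x in Ioo (a k) (a (k + 1)), φ x := split _ hI2
  -- per-piece estimate
  have hterm : ∀ k : ℕ, k < 2 ^ n →
      |(∫ x in Ioo (a k) (a (k + 1)), φ x * ψ (N * x - k)) -
        (∫ x in Ioo (a k) (a (k + 1)), φ x) * ∫ x in Ico (0:ℝ) 1, ψ x|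
        ≤ ((C : ℝ) * ρ ^ n * M) * (1 / N) := by
    intro k hk
    set s := Ioo (a k) (a (k + 1)) with hs
    have hsfin : volume s < ⊤ := lt_top_iff_ne_top.2 (hvolne k)
    set c : ℝ := N * ∫ x in s, φ x with hc
    -- the value of φ stays close to its average on the small interval
    have hclose : ∀ x ∈ s, |φ x - c| ≤ (C : ℝ) * ρ ^ n := by
      intro x hx
      have e : ∫ y in s, (φ x - φ y)
          = (volume s).toReal • φ x - ∫ y in s, φ y := by
        rw [integral_sub (integrableOn_const (C := φ x) hsfin.ne enorm_ne_top) (hI2 k hk),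
          setIntegral_const, measureReal_def]
      have e' : φ x - c = N * ∫ y in s, (φ x - φ y) := by
        rw [e, hvol k, smul_eq_mul, hc]
        field_simp
      have hb : ‖∫ y in s, (φ x - φ y)‖ ≤ ((C : ℝ) * ρ ^ n) * (volume s).toReal := by
        refine norm_setIntegral_le_of_norm_le_const hsfin
          (fun y hy => ?_)
        have hdist : dist x y ≤ 1 / N := by
          rw [Real.dist_eq, abs_sub_le_iff]
          constructor
          · have := hlen k; obtain ⟨hx1, hx2⟩ := hx; obtain ⟨hy1, hy2⟩ := hy
            linarith
          · have := hlen k; obtain ⟨hx1, hx2⟩ := hx; obtain ⟨hy1, hy2⟩ := hy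
            linarith
        have := holder_dist_le hφH (hsub k hk hx) (hsub k hk hy)
          (d := 1 / N) (by positivity) hdist
        rw [hρn] at this
        simpa using this
      calc |φ x - c| = N * ‖∫ y in s, (φ x - φ y)‖ := by
            rw [e', abs_mul, abs_of_pos hN0, Real.norm_eq_abs]
        _ ≤ N * (((C : ℝ) * ρ ^ n) * (volume s).toReal) := by
            exact mul_le_mul_of_nonneg_left hb hN0.le
        _ = (C : ℝ) * ρ ^ n := by
            rw [hvol k]; field_simp
    -- rewrite the product of integrals
    have h1 : (∫ x in s, φ x) * ∫ x in Ico (0:ℝ) 1, ψ x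
        = ∫ x in s, c * ψ (N * x - k) := by
      calc (∫ x in s, φ x) * ∫ x in Ico (0:ℝ) 1, ψ x
          = c * ((1 / N) * ∫ x in Ico (0:ℝ) 1, ψ x) := by
            rw [hc]; field_simp
        _ = c * ∫ x in s, ψ (N * x - k) := by rw [cov k]
        _ = ∫ x in s, c * ψ (N * x - k) := (integral_const_mul c _).symm
    have h2 : (∫ x in s, φ x * ψ (N * x - k)) - ∫ x in s, c * ψ (N * x - k)
        = ∫ x in s, (φ x - c) * ψ (N * x - k) := by
      rw [← integral_sub (hI4 k hk) ((hI3 k).const_mul c)]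
      refine setIntegral_congr_fun measurableSet_Ioo (fun x _ => ?_)
      ring
    rw [h1, h2]
    have hb2 : ‖∫ x in s, (φ x - c) * ψ (N * x - k)‖
        ≤ ((C : ℝ) * ρ ^ n * M) * (volume s).toReal := by
      refine norm_setIntegral_le_of_norm_le_const hsfin
        (fun x hx => ?_)
      rw [Real.norm_eq_abs, abs_mul]
      exact mul_le_mul (hclose x hx) (hM _) (abs_nonneg _) (by positivity)
    rw [Real.norm_eq_abs, hvol k] at hb2
    exact hb2
  -- assemble
  have hNcast : ((2 ^ n : ℕ) : ℝ) = N := by rw [hNdef]; push_cast; ring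
  have hIf : IntegrableOn (fun x => φ x * ψ (doubling^[n] x)) (Ico (0:ℝ) 1) := by
    refine integrableOn_of_bdd measurableSet_Ico (by simp)
      ((hφc.aestronglyMeasurable measurableSet_Ico).mul
        hDnm.aestronglyMeasurable.restrict)
      (M := (|φ 0| + (C : ℝ)) * M) (fun x hx => ?_)
    rw [abs_mul]
    exact mul_le_mul (hφbd x hx) (hM _) (abs_nonneg _) (by positivity)
  have hgoal_eq : ∫ x in Ico (0:ℝ) 1,
      (φ x * ψ (doubling^[n] x) -
        (∫ y in Ico (0:ℝ) 1, φ y) * ∫ y in Ico (0:ℝ) 1, ψ y)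
      = (∫ x in Ico (0:ℝ) 1, φ x * ψ (doubling^[n] x)) -
        (∫ x in Ico (0:ℝ) 1, φ x) * ∫ x in Ico (0:ℝ) 1, ψ x := by
    rw [integral_sub hIf (integrableOn_const (by simp)),
      setIntegral_const, measureReal_def, Real.volume_Ico]
    norm_num
  have key : (∫ x in Ico (0:ℝ) 1, φ x * ψ (doubling^[n] x)) -
      (∫ x in Ico (0:ℝ) 1, φ x) * ∫ x in Ico (0:ℝ) 1, ψ x
      = ∑ k ∈ Finset.range (2 ^ n),
        ((∫ x in Ioo (a k) (a (k + 1)), φ x * ψ (N * x - k)) -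
          (∫ x in Ioo (a k) (a (k + 1)), φ x) * ∫ x in Ico (0:ℝ) 1, ψ x) := by
    rw [hsplit1, hsplit2, Finset.sum_mul, Finset.sum_sub_distrib]
  rw [hgoal_eq, key]
  calc |∑ k ∈ Finset.range (2 ^ n),
        ((∫ x in Ioo (a k) (a (k + 1)), φ x * ψ (N * x - k)) -
          (∫ x in Ioo (a k) (a (k + 1)), φ x) * ∫ x in Ico (0:ℝ) 1, ψ x)|
      ≤ ∑ k ∈ Finset.range (2 ^ n),
        |(∫ x in Ioo (a k) (a (k + 1)), φ x * ψ (N * x - k)) -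
          (∫ x in Ioo (a k) (a (k + 1)), φ x) * ∫ x in Ico (0:ℝ) 1, ψ x| :=
        Finset.abs_sum_le_sum_abs _ _
    _ ≤ ∑ _k ∈ Finset.range (2 ^ n), ((C : ℝ) * ρ ^ n * M) * (1 / N) :=
        Finset.sum_le_sum (fun k hk => hterm k (Finset.mem_range.1 hk))
    _ = ((2 ^ n : ℕ) : ℝ) * (((C : ℝ) * ρ ^ n * M) * (1 / N)) := by
        rw [Finset.sum_const, Finset.card_range, nsmul_eq_mul]
    _ = (C : ℝ) * M * ρ ^ n := by
        rw [hNcast]; field_simp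
    _ ≤ ((C : ℝ) * M + 1) * ρ ^ n := by nlinarith
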